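/- (Super-hedge of Impermanent Loss) Under the hypotheses of the super-hedge theorem, the Impermanent Loss Ψ_T = Y₀ + X₀S*_T - V_T satisfies Ψ_T ≤ ∫₀^T (X₀ - X_t) dS*_t, i.e., IL is dominated by the gains of the self-financing rebalancing strategy holding X₀ - X_t units of the first asset. -/

import Mathlib

open MeasureTheory

/-- The Heaviside function. -/
noncomputable def heaviside (z : ℝ) : ℝ := if 0 < z then 1 else 0

private lemma fin_telescope {n : ℕ} (v : Fin (n+1) → ℝ) :
    ∑ i : Fin n, (v i.succ - v i.castSucc) = v (Fin.last n) - v 0 := by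
  set w : ℕ → ℝ := fun k => if h : k < n + 1 then v ⟨k, h⟩ else v (Fin.last n) with hw
  have key : ∀ i : Fin n, v i.succ - v i.castSucc = w ((i : ℕ) + 1) - w (i : ℕ) := by
    intro i
    have h1 : w ((i : ℕ) + 1) = v i.succ := by
      simp only [hw]; rw [dif_pos (by omega : (i : ℕ) + 1 < n + 1)]
      congr 1
    have h2 : w (i : ℕ) = v i.castSucc := by
      simp only [hw]; rw [dif_pos (by omega : (i : ℕ) < n + 1)]
      congr 1
    rw [h1, h2]
  calc ∑ i : Fin n, (v i.succ - v i.castSucc)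
      = ∑ i : Fin n, (w ((i : ℕ) + 1) - w (i : ℕ)) := by
        exact Finset.sum_congr rfl fun i _ => key i
    _ = ∑ k ∈ Finset.range n, (w (k + 1) - w k) :=
        Fin.sum_univ_eq_sum_range (fun k => w (k+1) - w k) n
    _ = w n - w 0 := Finset.sum_range_sub w n
    _ = v (Fin.last n) - v 0 := by
        simp only [hw]
        rw [dif_pos (by omega : n < n + 1), dif_pos (by omega : 0 < n + 1)]
        congr 1

private lemma sum_filter_split (J : Finset ℝ) (f : ℝ → ℝ) {a b : ℝ} (hab : a ≤ b) :
    ∑ s ∈ J.filter (· ≤ b), f s - ∑ s ∈ J.filter (· ≤ a), f s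
      = ∑ s ∈ J.filter (fun s => a < s ∧ s ≤ b), f s := by
  have h := Finset.sum_filter_add_sum_filter_not (J.filter (· ≤ b)) (fun s => s ≤ a) f
  rw [Finset.filter_filter, Finset.filter_filter] at h
  have e1 : J.filter (fun s => s ≤ b ∧ s ≤ a) = J.filter (· ≤ a) := by
    apply Finset.filter_congr; intro s _
    constructor
    · exact fun h => h.2
    · exact fun h => ⟨le_trans h hab, h⟩
  have e2 : J.filter (fun s => s ≤ b ∧ ¬ s ≤ a) = J.filter (fun s => a < s ∧ s ≤ b) := by
    apply Finset.filter_congr; intro s _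
    constructor
    · rintro ⟨h1, h2⟩; exact ⟨lt_of_not_ge h2, h1⟩
    · rintro ⟨h1, h2⟩; exact ⟨h2, not_le.2 h1⟩
  rw [e1, e2] at h
  linarith

private lemma amgm_tangent {α a b u v : ℝ} (hα0 : 0 < α) (hα1 : α < 1)
    (ha : 0 < a) (hb : 0 < b) (hu : 0 ≤ u) (hv : 0 ≤ v)
    (h : a ^ α * b ^ (1 - α) ≤ u ^ α * v ^ (1 - α)) :
    0 ≤ α * (u - a) * b + (1 - α) * (v - b) * a := by
  have hgm := Real.geom_mean_le_arith_mean2_weighted (w₁ := α) (w₂ := 1 - α)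
    (p₁ := u / a) (p₂ := v / b) hα0.le (by linarith)
    (div_nonneg hu ha.le) (div_nonneg hv hb.le) (by ring)
  have hfac : u ^ α * v ^ (1 - α)
      = a ^ α * b ^ (1 - α) * ((u / a) ^ α * (v / b) ^ (1 - α)) := by
    rw [Real.div_rpow hu ha.le, Real.div_rpow hv hb.le]
    field_simp
    try ring
  have hpos : 0 < a ^ α * b ^ (1 - α) := by positivity
  have h1 : (1 : ℝ) ≤ α * (u / a) + (1 - α) * (v / b) := by
    rw [hfac] at h
    have hh : a ^ α * b ^ (1 - α) * 1 ≤ a ^ α * b ^ (1 - α) * (α * (u / a) + (1 - α) * (v / b)) := by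
      rw [mul_one]
      exact h.trans (mul_le_mul_of_nonneg_left hgm hpos.le)
    exact (mul_le_mul_iff_right₀ hpos).1 hh
  have h2 : 0 ≤ α * (u - a) / a + (1 - α) * (v - b) / b := by
    have e : α * (u - a) / a + (1 - α) * (v - b) / b
        = (α * (u / a) + (1 - α) * (v / b)) - 1 := by
      field_simp
      try ring
    rw [e]; linarith
  have := mul_nonneg h2 (mul_pos ha hb).le
  calc (0:ℝ) ≤ (α * (u - a) / a + (1 - α) * (v - b) / b) * (a * b) := this
    _ = α * (u - a) * b + (1 - α) * (v - b) * a := by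
        field_simp
        try ring

set_option maxHeartbeats 1000000 in
private lemma jump_key {α τ β a b dx dy S : ℝ}
    (hα0 : 0 < α) (hα1 : α < 1) (hτ0 : 0 < τ) (hτ1 : τ < 1)
    (hβ : β = α / (1 - α)) (ha : 0 < a) (hb : 0 < b)
    (hXs : 0 < a + dx) (hYs : 0 < b + dy)
    (hBle : (1 - τ) * β * b / a ≤ S) (hAle : S ≤ β * b / ((1 - τ) * a))
    (hxy : dx * dy ≤ 0)
    (htrade : a ^ α * b ^ (1 - α) ≤
      (a + (1 - τ * heaviside dx) * dx) ^ α * (b + (1 - τ * heaviside dy) * dy) ^ (1 - α)) :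
    0 ≤ S * dx + dy := by
  have h1α : (0:ℝ) < 1 - α := by linarith
  have hβα : β * (1 - α) = α := by rw [hβ]; exact div_mul_cancel₀ α (by linarith)
  have hβpos : 0 < β := by rw [hβ]; exact div_pos hα0 h1α
  rcases lt_trichotomy dx 0 with hx | hx | hx
  · -- dx < 0 : dy ≥ 0
    have hy : 0 ≤ dy := by nlinarith
    have hHx : heaviside dx = 0 := by simp [heaviside]; linarith
    rcases eq_or_lt_of_le hy with hy0 | hy0
    · -- dy = 0 : contradiction with master
      exfalso
      have hHy : heaviside dy = 0 := by simp [heaviside]; linarith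
      rw [hHx, hHy] at htrade
      subst hy0
      have hm := amgm_tangent hα0 hα1 ha hb (by linarith [hXs] : (0:ℝ) ≤ a + (1 - τ * 0) * dx)
        (by linarith : (0:ℝ) ≤ b + (1 - τ * 0) * 0) htrade
      clear htrade hAle hBle
      nlinarith [hm, mul_neg_of_neg_of_pos (mul_neg_of_pos_of_neg hα0 hx) hb]
    · have hHy : heaviside dy = 1 := by simp [heaviside, hy0]
      rw [hHx, hHy] at htrade
      have hm := amgm_tangent hα0 hα1 ha hb (by linarith : (0:ℝ) ≤ a + (1 - τ * 0) * dx)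
        (by nlinarith [mul_nonneg (by linarith : (0:ℝ) ≤ 1 - τ) hy] : (0:ℝ) ≤ b + (1 - τ * 1) * dy) htrade
      clear htrade
      have hm' : 0 ≤ α * dx * b + (1 - α) * ((1 - τ) * dy) * a := by linarith [hm]
      have hAle' : S * ((1 - τ) * a) ≤ β * b :=
        (le_div_iff₀ (by nlinarith : (0:ℝ) < (1 - τ) * a)).1 hAle
      have hAle2 : S * ((1 - τ) * a) * (1 - α) ≤ α * b := by
        calc S * ((1 - τ) * a) * (1 - α) ≤ β * b * (1 - α) :=
              mul_le_mul_of_nonneg_right hAle' h1α.le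
          _ = α * b := by linear_combination b * hβα
      have hc : (0:ℝ) < (1 - α) * ((1 - τ) * a) :=
        mul_pos h1α (mul_pos (by linarith) ha)
      have key : ((1 - α) * ((1 - τ) * a)) * 0 ≤ ((1 - α) * ((1 - τ) * a)) * (S * dx + dy) := by
        linarith [mul_le_mul_of_nonneg_right hAle2 (by linarith : (0:ℝ) ≤ -dx), hm']
      exact le_of_mul_le_mul_left key hc
  · -- dx = 0
    subst hx
    rcases le_or_gt 0 dy with hy | hy
    · simpa using hy
    · exfalso
      have hHy : heaviside dy = 0 := by simp [heaviside]; linarith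
      rw [hHy] at htrade
      have hm := amgm_tangent hα0 hα1 ha hb
        (by linarith : (0:ℝ) ≤ a + (1 - τ * heaviside 0) * 0)
        (by linarith [hYs] : (0:ℝ) ≤ b + (1 - τ * 0) * dy) htrade
      clear htrade hAle hBle
      nlinarith [hm, mul_neg_of_neg_of_pos (mul_neg_of_pos_of_neg h1α hy) ha]
  · -- dx > 0 : dy ≤ 0
    have hy : dy ≤ 0 := by nlinarith
    have hHx : heaviside dx = 1 := by simp [heaviside, hx]
    have hHy : heaviside dy = 0 := by simp [heaviside]; linarith
    rw [hHx, hHy] at htrade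
    have hm := amgm_tangent hα0 hα1 ha hb
      (by nlinarith [mul_nonneg (by linarith : (0:ℝ) ≤ 1 - τ) hx.le] : (0:ℝ) ≤ a + (1 - τ * 1) * dx)
      (by linarith [hYs] : (0:ℝ) ≤ b + (1 - τ * 0) * dy) htrade
    clear htrade
    have hm' : 0 ≤ α * ((1 - τ) * dx) * b + (1 - α) * dy * a := by linarith [hm]
    have hBle' : (1 - τ) * β * b ≤ S * a := (div_le_iff₀ ha).1 hBle
    have hBle2 : (1 - τ) * α * b ≤ S * a * (1 - α) := by
      calc (1 - τ) * α * b = (1 - τ) * β * b * (1 - α) := by linear_combination (τ - 1) * b * hβα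
        _ ≤ S * a * (1 - α) := mul_le_mul_of_nonneg_right hBle' h1α.le
    have hc : (0:ℝ) < (1 - α) * a := mul_pos h1α ha
    have key : ((1 - α) * a) * 0 ≤ ((1 - α) * a) * (S * dx + dy) := by
      linarith [mul_le_mul_of_nonneg_right hBle2 hx.le, hm']
    exact le_of_mul_le_mul_left key hc


set_option maxHeartbeats 2000000 in
/-- **Super-hedge theorem.** Let `S*` be a positive continuous (pathwise) price, and let
`(X,Y)` be the G3M reserve processes with fee `τ ∈ (0,1)`: continuous nondecreasing parts
`X↑, X↓, Y↑, Y↓` (Stieltjes functions) with `dY↓ = B dX↑`, `dY↑ = A dX↓`, `X↑` (resp. `X↓`)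
increasing only on `{B = S*}` (resp. `{A = S*}`), where `B = (1-τ)βY/X`,
`A = βY/((1-τ)X)`, plus finitely many jumps at times in `J` satisfying the no-arbitrage
bound `B₋ ≤ S* ≤ A₋` and the trading-function inequality. If `I` is the (pathwise) integral
`∫₀^T (X₀ - X_t) dS*_t`, defined as the limit of left-endpoint Riemann sums, then the
Impermanent Loss `Ψ_T = Y₀ + X₀·S*_T - V_T` (with `V = Y + X·S*`) is dominated by the gains
`I = ∫₀^T (X₀ - X_t) dS*_t` of the rebalancing strategy: `Ψ_T ≤ I`. -/
theorem stmt_17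
    (α τ β x₀ y₀ T : ℝ)
    (hα : α ∈ Set.Ioo (0 : ℝ) 1) (hτ : τ ∈ Set.Ioo (0 : ℝ) 1)
    (hβ : β = α / (1 - α)) (hx₀ : 0 < x₀) (hy₀ : 0 < y₀) (hT : 0 ≤ T)
    (Sstar : ℝ → ℝ) (hScont : Continuous Sstar) (hSpos : ∀ t, 0 < Sstar t)
    (Xup Xdown Yup Ydown : StieltjesFunction ℝ)
    (hXupc : Continuous fun t => Xup t) (hXdownc : Continuous fun t => Xdown t)
    (hYupc : Continuous fun t => Yup t) (hYdownc : Continuous fun t => Ydown t)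
    (hXup0 : ∀ t ≤ (0 : ℝ), Xup t = 0) (hXdown0 : ∀ t ≤ (0 : ℝ), Xdown t = 0)
    (hYup0 : ∀ t ≤ (0 : ℝ), Yup t = 0) (hYdown0 : ∀ t ≤ (0 : ℝ), Ydown t = 0)
    (J : Finset ℝ) (hJ : ↑J ⊆ Set.Ioc 0 T)
    (Δx Δy : ℝ → ℝ)
    (X Y Xleft Yleft B A : ℝ → ℝ)
    (hX : ∀ t, X t = x₀ + Xup t - Xdown t + ∑ s ∈ J.filter (· ≤ t), Δx s)
    (hY : ∀ t, Y t = y₀ + Yup t - Ydown t + ∑ s ∈ J.filter (· ≤ t), Δy s)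
    (hXleft : ∀ t, Xleft t = x₀ + Xup t - Xdown t + ∑ s ∈ J.filter (· < t), Δx s)
    (hYleft : ∀ t, Yleft t = y₀ + Yup t - Ydown t + ∑ s ∈ J.filter (· < t), Δy s)
    (hXpos : ∀ t, 0 < X t) (hYpos : ∀ t, 0 < Y t)
    (hXleftpos : ∀ t, 0 < Xleft t) (hYleftpos : ∀ t, 0 < Yleft t)
    (hB : ∀ t, B t = (1 - τ) * β * Y t / X t)
    (hA : ∀ t, A t = β * Y t / ((1 - τ) * X t))
    (hYd : Ydown.measure = Xup.measure.withDensity fun t => ENNReal.ofReal (B t))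
    (hYu : Yup.measure = Xdown.measure.withDensity fun t => ENNReal.ofReal (A t))
    (hXupsupp : Xup.measure {t | B t ≠ Sstar t} = 0)
    (hXdownsupp : Xdown.measure {t | A t ≠ Sstar t} = 0)
    (hNAjump : ∀ s ∈ J,
      (1 - τ) * β * Yleft s / Xleft s ≤ Sstar s ∧
      Sstar s ≤ β * Yleft s / ((1 - τ) * Xleft s))
    (hjump : ∀ s ∈ J, Δx s * Δy s ≤ 0 ∧
      (Xleft s) ^ α * (Yleft s) ^ (1 - α) ≤
        (Xleft s + (1 - τ * heaviside (Δx s)) * Δx s) ^ α *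
          (Yleft s + (1 - τ * heaviside (Δy s)) * Δy s) ^ (1 - α))
    (I : ℝ)
    (hI : ∀ ε > 0, ∃ δ > 0, ∀ n : ℕ, ∀ t : Fin (n + 1) → ℝ,
      Monotone t → t 0 = 0 → t (Fin.last n) = T →
      (∀ i : Fin n, t i.succ - t i.castSucc < δ) →
      |(∑ i : Fin n, (x₀ - X (t i.castSucc)) * (Sstar (t i.succ) - Sstar (t i.castSucc))) - I| < ε) :
    Y 0 + X 0 * Sstar T - (Y T + X T * Sstar T) ≤ I := by
  obtain ⟨hα0, hα1⟩ := hα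
  obtain ⟨hτ0, hτ1⟩ := hτ
  -- jump decomposition at s ∈ J
  have hXjump : ∀ s ∈ J, X s = Xleft s + Δx s := by
    intro s hs
    rw [hX s, hXleft s]
    have he : J.filter (· ≤ s) = insert s (J.filter (· < s)) := by
      ext u
      simp only [Finset.mem_filter, Finset.mem_insert]
      constructor
      · rintro ⟨hu, hle⟩
        rcases eq_or_lt_of_le hle with h | h
        · exact Or.inl h
        · exact Or.inr ⟨hu, h⟩
      · rintro (h | ⟨hu, hlt⟩)
        · exact ⟨h ▸ hs, le_of_eq h⟩
        · exact ⟨hu, hlt.le⟩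
    rw [he, Finset.sum_insert (by simp)]
    ring
  have hYjump : ∀ s ∈ J, Y s = Yleft s + Δy s := by
    intro s hs
    rw [hY s, hYleft s]
    have he : J.filter (· ≤ s) = insert s (J.filter (· < s)) := by
      ext u
      simp only [Finset.mem_filter, Finset.mem_insert]
      constructor
      · rintro ⟨hu, hle⟩
        rcases eq_or_lt_of_le hle with h | h
        · exact Or.inl h
        · exact Or.inr ⟨hu, h⟩
      · rintro (h | ⟨hu, hlt⟩)
        · exact ⟨h ▸ hs, le_of_eq h⟩
        · exact ⟨hu, hlt.le⟩
    rw [he, Finset.sum_insert (by simp)]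
    ring
  -- key jump inequality
  have hkey : ∀ s ∈ J, 0 ≤ Sstar s * Δx s + Δy s := by
    intro s hs
    refine jump_key hα0 hα1 hτ0 hτ1 hβ (hXleftpos s) (hYleftpos s) ?_ ?_
      (hNAjump s hs).1 (hNAjump s hs).2 (hjump s hs).1 (hjump s hs).2
    · rw [← hXjump s hs]; exact hXpos s
    · rw [← hYjump s hs]; exact hYpos s
  -- values at 0
  have hJle : ∀ t : ℝ, t ≤ 0 → J.filter (· ≤ t) = ∅ := by
    intro t ht
    rw [Finset.filter_eq_empty_iff]
    intro s hs
    have := (hJ hs).1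
    intro h
    linarith
  have hX00 : X 0 = x₀ := by
    rw [hX 0, hXup0 0 le_rfl, hXdown0 0 le_rfl, hJle 0 le_rfl]
    simp
  -- uniform continuity of Sstar on [0,T]
  have hUC : UniformContinuousOn Sstar (Set.Icc 0 T) :=
    (isCompact_Icc).uniformContinuousOn_of_continuous hScont.continuousOn
  rw [Metric.uniformContinuousOn_iff] at hUC
  -- the total-variation constant
  set C : ℝ := Xup T + Xdown T + ∑ s ∈ J, |Δx s| with hCdef
  have hXupT : 0 ≤ Xup T := by
    have := Xup.mono hT
    rw [hXup0 0 le_rfl] at this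
    exact this
  have hXdownT : 0 ≤ Xdown T := by
    have := Xdown.mono hT
    rw [hXdown0 0 le_rfl] at this
    exact this
  have hC0 : 0 ≤ C := by
    have : 0 ≤ ∑ s ∈ J, |Δx s| := Finset.sum_nonneg fun s _ => abs_nonneg _
    positivity
  -- main ε-argument
  apply le_of_forall_pos_le_add
  intro ε hε
  obtain ⟨δ₀, hδ₀, hRS⟩ := hI (ε / 2) (by linarith)
  set ε' : ℝ := (ε / 2) / (C + 1) with hε'def
  have hε'0 : 0 < ε' := by positivity
  obtain ⟨δ₁, hδ₁0, hδ₁⟩ := hUC ε' hε'0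
  set δ : ℝ := min δ₀ δ₁ with hδdef
  have hδ0 : 0 < δ := lt_min hδ₀ hδ₁0
  -- the interval estimate
  have hEst : ∀ a b : ℝ, 0 ≤ a → a ≤ b → b ≤ T → b - a < δ₁ →
      -ε' * ((Xup b - Xup a) + (Xdown b - Xdown a) +
        (∑ s ∈ J.filter (· ≤ b), |Δx s| - ∑ s ∈ J.filter (· ≤ a), |Δx s|)) ≤
      Sstar b * (X b - X a) + (Y b - Y a) := by
    intro a b ha0 hab hbT hmesh
    have hbIcc : b ∈ Set.Icc (0:ℝ) T := ⟨le_trans ha0 hab, hbT⟩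
    have hXupm : 0 ≤ Xup b - Xup a := sub_nonneg.2 (Xup.mono hab)
    have hXdownm : 0 ≤ Xdown b - Xdown a := sub_nonneg.2 (Xdown.mono hab)
    have hYupm : 0 ≤ Yup b - Yup a := sub_nonneg.2 (Yup.mono hab)
    have hYdownm : 0 ≤ Ydown b - Ydown a := sub_nonneg.2 (Ydown.mono hab)
    -- pointwise bound on Sstar over the interval
    have hSbnd : ∀ u ∈ Set.Ioc a b, |Sstar u - Sstar b| < ε' := by
      intro u hu
      have huIcc : u ∈ Set.Icc (0:ℝ) T := ⟨le_trans ha0 hu.1.le, le_trans hu.2 hbT⟩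
      have hd : dist u b < δ₁ := by
        rw [Real.dist_eq, abs_of_nonpos (by linarith [hu.2] : u - b ≤ 0)]
        linarith [hu.1]
      have := hδ₁ u huIcc b hbIcc hd
      rwa [Real.dist_eq] at this
    -- bound 1 : Ydown increment
    have hb1 : Ydown b - Ydown a ≤ (Sstar b + ε') * (Xup b - Xup a) := by
      have e1 : Ydown.measure (Set.Ioc a b)
          = ∫⁻ u in Set.Ioc a b, ENNReal.ofReal (B u) ∂Xup.measure := by
        rw [hYd]; exact withDensity_apply _ measurableSet_Ioc
      have hae1 : ∀ᵐ u ∂(Xup.measure.restrict (Set.Ioc a b)), B u = Sstar u := by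
        rw [ae_iff]
        exact le_antisymm (le_trans (Measure.restrict_apply_le _ _) hXupsupp.le) (by simp)
      have hub : ∀ᵐ u ∂(Xup.measure.restrict (Set.Ioc a b)),
          ENNReal.ofReal (B u) ≤ ENNReal.ofReal (Sstar b + ε') := by
        filter_upwards [hae1, ae_restrict_mem measurableSet_Ioc] with u hBu hu
        apply ENNReal.ofReal_le_ofReal
        rw [hBu]
        have := hSbnd u hu
        have := abs_lt.1 this
        linarith [this.2]
      have hENN : ENNReal.ofReal (Ydown b - Ydown a)
          ≤ ENNReal.ofReal ((Sstar b + ε') * (Xup b - Xup a)) := by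
        calc ENNReal.ofReal (Ydown b - Ydown a) = Ydown.measure (Set.Ioc a b) :=
              (Ydown.measure_Ioc a b).symm
          _ = ∫⁻ u in Set.Ioc a b, ENNReal.ofReal (B u) ∂Xup.measure := e1
          _ ≤ ∫⁻ _ in Set.Ioc a b, ENNReal.ofReal (Sstar b + ε') ∂Xup.measure :=
              lintegral_mono_ae hub
          _ = ENNReal.ofReal (Sstar b + ε') * Xup.measure (Set.Ioc a b) :=
              setLIntegral_const _ _
          _ = ENNReal.ofReal ((Sstar b + ε') * (Xup b - Xup a)) := by
              rw [Xup.measure_Ioc, ← ENNReal.ofReal_mul (by linarith [hSpos b])]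
      exact (ENNReal.ofReal_le_ofReal_iff
        (mul_nonneg (by linarith [hSpos b]) hXupm)).1 hENN
    -- bound 2 : Yup increment
    have hb2 : (Sstar b - ε') * (Xdown b - Xdown a) ≤ Yup b - Yup a := by
      rcases le_or_gt (Sstar b - ε') 0 with hc | hc
      · exact le_trans (mul_nonpos_of_nonpos_of_nonneg hc hXdownm) hYupm
      · have e1 : Yup.measure (Set.Ioc a b)
            = ∫⁻ u in Set.Ioc a b, ENNReal.ofReal (A u) ∂Xdown.measure := by
          rw [hYu]; exact withDensity_apply _ measurableSet_Ioc
        have hae1 : ∀ᵐ u ∂(Xdown.measure.restrict (Set.Ioc a b)), A u = Sstar u := by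
          rw [ae_iff]
          exact le_antisymm (le_trans (Measure.restrict_apply_le _ _) hXdownsupp.le) (by simp)
        have hub : ∀ᵐ u ∂(Xdown.measure.restrict (Set.Ioc a b)),
            ENNReal.ofReal (Sstar b - ε') ≤ ENNReal.ofReal (A u) := by
          filter_upwards [hae1, ae_restrict_mem measurableSet_Ioc] with u hAu hu
          apply ENNReal.ofReal_le_ofReal
          rw [hAu]
          have := abs_lt.1 (hSbnd u hu)
          linarith [this.1]
        have hENN : ENNReal.ofReal ((Sstar b - ε') * (Xdown b - Xdown a))
            ≤ ENNReal.ofReal (Yup b - Yup a) := by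
          calc ENNReal.ofReal ((Sstar b - ε') * (Xdown b - Xdown a))
              = ENNReal.ofReal (Sstar b - ε') * Xdown.measure (Set.Ioc a b) := by
                rw [Xdown.measure_Ioc, ← ENNReal.ofReal_mul hc.le]
            _ = ∫⁻ _ in Set.Ioc a b, ENNReal.ofReal (Sstar b - ε') ∂Xdown.measure :=
                (setLIntegral_const _ _).symm
            _ ≤ ∫⁻ u in Set.Ioc a b, ENNReal.ofReal (A u) ∂Xdown.measure :=
                lintegral_mono_ae hub
            _ = Yup.measure (Set.Ioc a b) := e1.symm
            _ = ENNReal.ofReal (Yup b - Yup a) := Yup.measure_Ioc a b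
        exact (ENNReal.ofReal_le_ofReal_iff hYupm).1 hENN
    -- jump bound
    have hjb : ∀ s ∈ J.filter (fun s => a < s ∧ s ≤ b),
        -ε' * |Δx s| ≤ Sstar b * Δx s + Δy s := by
      intro s hs
      obtain ⟨hsJ, hsab⟩ := Finset.mem_filter.1 hs
      have h1 : |Sstar s - Sstar b| < ε' := hSbnd s hsab
      have h2 : -(ε' * |Δx s|) ≤ (Sstar b - Sstar s) * Δx s := by
        have hn := neg_abs_le ((Sstar b - Sstar s) * Δx s)
        rw [abs_mul] at hn
        have h3 : |Sstar b - Sstar s| * |Δx s| ≤ ε' * |Δx s| :=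
          mul_le_mul_of_nonneg_right (by rw [abs_sub_comm]; exact h1.le) (abs_nonneg _)
        linarith
      have := hkey s hsJ
      nlinarith [this, h2]
    have hjsum : -ε' * (∑ s ∈ J.filter (· ≤ b), |Δx s| - ∑ s ∈ J.filter (· ≤ a), |Δx s|)
        ≤ Sstar b * (∑ s ∈ J.filter (fun s => a < s ∧ s ≤ b), Δx s)
          + ∑ s ∈ J.filter (fun s => a < s ∧ s ≤ b), Δy s := by
      rw [sum_filter_split J (fun s => |Δx s|) hab]
      calc -ε' * ∑ s ∈ J.filter (fun s => a < s ∧ s ≤ b), |Δx s|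
          = ∑ s ∈ J.filter (fun s => a < s ∧ s ≤ b), (-ε' * |Δx s|) := Finset.mul_sum _ _ _
        _ ≤ ∑ s ∈ J.filter (fun s => a < s ∧ s ≤ b), (Sstar b * Δx s + Δy s) :=
            Finset.sum_le_sum hjb
        _ = _ := by rw [Finset.sum_add_distrib, Finset.mul_sum]
    -- assemble
    have hXΔ : X b - X a = (Xup b - Xup a) - (Xdown b - Xdown a)
        + ∑ s ∈ J.filter (fun s => a < s ∧ s ≤ b), Δx s := by
      rw [hX b, hX a, ← sum_filter_split J Δx hab]; ring
    have hYΔ : Y b - Y a = (Yup b - Yup a) - (Ydown b - Ydown a)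
        + ∑ s ∈ J.filter (fun s => a < s ∧ s ≤ b), Δy s := by
      rw [hY b, hY a, ← sum_filter_split J Δy hab]; ring
    rw [hXΔ, hYΔ]
    nlinarith [hb1, hb2, hjsum]
  -- choose a fine uniform partition
  obtain ⟨N, hN⟩ := exists_nat_gt (T / δ)
  have hN0 : 0 < N := by
    by_contra h
    push_neg at h
    interval_cases N
    · simp at hN; nlinarith [div_nonneg hT hδ0.le]
  have hNδ : T / N < δ := by
    rw [div_lt_iff₀ (by exact_mod_cast hN0)]
    rw [div_lt_iff₀ hδ0] at hN
    linarith
  set t : Fin (N + 1) → ℝ := fun i => (i : ℕ) * T / N with htdef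
  have htmono : Monotone t := by
    intro i j hij
    have hc : ((i : ℕ) : ℝ) ≤ ((j : ℕ) : ℝ) := Nat.cast_le.2 hij
    have hNpos : (0:ℝ) < (N:ℝ) := by exact_mod_cast hN0
    exact (div_le_div_iff_of_pos_right hNpos).2 (mul_le_mul_of_nonneg_right hc hT)
  have ht0 : t 0 = 0 := by simp [htdef]
  have htlast : t (Fin.last N) = T := by
    simp only [htdef, Fin.val_last]
    field_simp
  have htmesh : ∀ i : Fin N, t i.succ - t i.castSucc = T / N := by
    intro i
    simp only [htdef, Fin.val_succ, Fin.coe_castSucc]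
    push_cast
    field_simp
    ring
  -- Riemann sum close to I
  have hRSapp := hRS N t htmono ht0 htlast
    (fun i => by rw [htmesh i]; exact lt_of_lt_of_le hNδ (min_le_left _ _))
  -- the decomposition via telescoping
  have htel := fin_telescope (fun i => x₀ * Sstar (t i) - X (t i) * Sstar (t i) - Y (t i))
  simp only [htlast, ht0] at htel
  have htel2 := fin_telescope
    (fun i => Xup (t i) + Xdown (t i) + ∑ s ∈ J.filter (· ≤ t i), |Δx s|)
  simp only [htlast, ht0] at htel2
  set G : Fin N → ℝ := fun i =>
    Sstar (t i.succ) * (X (t i.succ) - X (t i.castSucc)) + (Y (t i.succ) - Y (t i.castSucc))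
    with hGdef
  have hsumG : (∑ i : Fin N, (x₀ - X (t i.castSucc)) * (Sstar (t i.succ) - Sstar (t i.castSucc)))
      - (∑ i : Fin N, G i)
      = (x₀ * Sstar T - X T * Sstar T - Y T) - (x₀ * Sstar 0 - X 0 * Sstar 0 - Y 0) := by
    rw [← htel, ← Finset.sum_sub_distrib]
    apply Finset.sum_congr rfl
    intro i _
    simp only [hGdef]
    ring
  -- lower bound for ∑ G
  have hGlb : ∀ i : Fin N,
      -ε' * ((fun i => Xup (t i) + Xdown (t i) + ∑ s ∈ J.filter (· ≤ t i), |Δx s|) i.succ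
        - (fun i => Xup (t i) + Xdown (t i) + ∑ s ∈ J.filter (· ≤ t i), |Δx s|) i.castSucc)
      ≤ G i := by
    intro i
    have ha0 : 0 ≤ t i.castSucc := ht0 ▸ htmono (Fin.zero_le _)
    have hab : t i.castSucc ≤ t i.succ := htmono (Fin.castSucc_le_succ i)
    have hbT : t i.succ ≤ T := htlast ▸ htmono (Fin.le_last _)
    have hmesh : t i.succ - t i.castSucc < δ₁ := by
      rw [htmesh i]; exact lt_of_lt_of_le hNδ (min_le_right _ _)
    have := hEst (t i.castSucc) (t i.succ) ha0 hab hbT hmesh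
    simp only [hGdef]
    calc -ε' * ((Xup (t i.succ) + Xdown (t i.succ) + ∑ s ∈ J.filter (· ≤ t i.succ), |Δx s|)
          - (Xup (t i.castSucc) + Xdown (t i.castSucc) + ∑ s ∈ J.filter (· ≤ t i.castSucc), |Δx s|))
        = -ε' * ((Xup (t i.succ) - Xup (t i.castSucc)) + (Xdown (t i.succ) - Xdown (t i.castSucc))
          + (∑ s ∈ J.filter (· ≤ t i.succ), |Δx s| - ∑ s ∈ J.filter (· ≤ t i.castSucc), |Δx s|)) := by
          ring
      _ ≤ _ := this
  have hGsum : -ε' * C ≤ ∑ i : Fin N, G i := by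
    have h1 : ∑ i : Fin N,
        (-ε' * ((fun i => Xup (t i) + Xdown (t i) + ∑ s ∈ J.filter (· ≤ t i), |Δx s|) i.succ
          - (fun i => Xup (t i) + Xdown (t i) + ∑ s ∈ J.filter (· ≤ t i), |Δx s|) i.castSucc))
        ≤ ∑ i : Fin N, G i := Finset.sum_le_sum fun i _ => hGlb i
    have h2 : ∑ i : Fin N,
        (-ε' * ((fun i => Xup (t i) + Xdown (t i) + ∑ s ∈ J.filter (· ≤ t i), |Δx s|) i.succ
          - (fun i => Xup (t i) + Xdown (t i) + ∑ s ∈ J.filter (· ≤ t i), |Δx s|) i.castSucc))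
        = -ε' * ((Xup T + Xdown T + ∑ s ∈ J.filter (· ≤ T), |Δx s|)
          - (Xup 0 + Xdown 0 + ∑ s ∈ J.filter (· ≤ (0:ℝ)), |Δx s|)) := by
      rw [← Finset.mul_sum, htel2]
    have hJT : J.filter (· ≤ T) = J := Finset.filter_true_of_mem fun s hs => (hJ hs).2
    have hJ0 : J.filter (· ≤ (0:ℝ)) = ∅ := hJle 0 le_rfl
    rw [h2, hJT, hJ0, hXup0 0 le_rfl, hXdown0 0 le_rfl] at h1
    simp only [Finset.sum_empty] at h1
    calc -ε' * C = -ε' * (Xup T + Xdown T + ∑ s ∈ J, |Δx s| - (0 + 0 + 0)) := by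
          rw [hCdef]; ring
      _ ≤ ∑ i : Fin N, G i := h1
  -- combine
  have hεC : ε' * C ≤ ε / 2 := by
    rw [hε'def]
    rw [div_mul_eq_mul_div, div_le_iff₀ (by linarith)]
    nlinarith
  have habs := abs_lt.1 hRSapp
  have hfinal := hsumG
  rw [hX00] at hfinal
  -- hfinal : Sum - ∑ G = (x₀ S_T - X_T S_T - Y_T) - (x₀ S_0 - x₀ S_0 - Y 0)
  have : Y 0 + X 0 * Sstar T - (Y T + X T * Sstar T)
      = (∑ i : Fin N, (x₀ - X (t i.castSucc)) * (Sstar (t i.succ) - Sstar (t i.castSucc)))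
        - (∑ i : Fin N, G i) := by
    rw [hfinal, hX00]
    ring
  rw [this]
  have hhalf : -(ε/2) ≤ ∑ i : Fin N, G i := by
    calc -(ε/2) ≤ -(ε' * C) := neg_le_neg hεC
      _ = -ε' * C := (neg_mul ε' C).symm
      _ ≤ ∑ i : Fin N, G i := hGsum
  linarith [hhalf, habs.2]
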